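/- Let Λ_t, Λ_s ∈ Sym(2n,ℝ) and suppose Λ_s¹¹ + Λ_t²² is negative definite. Define Λ_{t,s} ∈ Sym(2n,ℝ) by the ⊛-product: (Λ_t⊛Λ_s)¹¹ = Λ_t¹¹ − Λ_t¹²(Λ_s¹¹+Λ_t²²)⁻¹(Λ_t¹²)ᵀ, (Λ_t⊛Λ_s)¹² = −Λ_t¹²(Λ_s¹¹+Λ_t²²)⁻¹Λ_s¹², (Λ_t⊛Λ_s)²² = Λ_s²² − (Λ_s¹²)ᵀ(Λ_s¹¹+Λ_t²²)⁻¹Λ_s¹². Then for all x, y ∈ ℝⁿ, sup_{η∈ℝⁿ} ( ½[x;η]ᵀΛ_t[x;η] + ½[η;y]ᵀΛ_s[η;y] ) = ½[x;y]ᵀ(Λ_t⊛Λ_s)[x;y]. -/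

import Mathlib

open Matrix

private lemma dot_transpose_mulVec {n : ℕ} (M : Matrix (Fin n) (Fin n) ℝ)
    (u v : Fin n → ℝ) : u ⬝ᵥ (Mᵀ *ᵥ v) = v ⬝ᵥ (M *ᵥ u) := by
  rw [dotProduct_mulVec, vecMul_transpose, dotProduct_comm]

private lemma dot_mulVec_transpose {n : ℕ} (M : Matrix (Fin n) (Fin n) ℝ)
    (u v : Fin n → ℝ) : u ⬝ᵥ (M *ᵥ v) = v ⬝ᵥ (Mᵀ *ᵥ u) := by
  conv_lhs => rw [← transpose_transpose M]
  rw [dot_transpose_mulVec]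

/-- The ⊛-product of two symmetric `2n×2n` matrices computes the max-plus
composition of the associated quadratic kernels:
`sup_η (½[x;η]ᵀΛ_t[x;η] + ½[η;y]ᵀΛ_s[η;y]) = ½[x;y]ᵀ(Λ_t⊛Λ_s)[x;y]`. -/
theorem ostar_product_sup {n : ℕ}
    (T11 T12 T22 S11 S12 S22 : Matrix (Fin n) (Fin n) ℝ)
    (hT11 : T11ᵀ = T11) (hT22 : T22ᵀ = T22)
    (hS11 : S11ᵀ = S11) (hS22 : S22ᵀ = S22)
    (hneg : (-(S11 + T22)).PosDef) :
    ∀ x y : Fin n → ℝ,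
      let Λt : Matrix (Fin n ⊕ Fin n) (Fin n ⊕ Fin n) ℝ := fromBlocks T11 T12 T12ᵀ T22
      let Λs : Matrix (Fin n ⊕ Fin n) (Fin n ⊕ Fin n) ℝ := fromBlocks S11 S12 S12ᵀ S22
      let P11 := T11 - T12 * (S11 + T22)⁻¹ * T12ᵀ
      let P12 := -(T12 * (S11 + T22)⁻¹ * S12)
      let P22 := S22 - S12ᵀ * (S11 + T22)⁻¹ * S12
      let Λts : Matrix (Fin n ⊕ Fin n) (Fin n ⊕ Fin n) ℝ := fromBlocks P11 P12 P12ᵀ P22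
      (⨆ η : Fin n → ℝ,
          (1/2 : ℝ) * (Sum.elim x η ⬝ᵥ (Λt *ᵥ Sum.elim x η)) +
            (1/2 : ℝ) * (Sum.elim η y ⬝ᵥ (Λs *ᵥ Sum.elim η y)))
        = (1/2 : ℝ) * (Sum.elim x y ⬝ᵥ (Λts *ᵥ Sum.elim x y)) := by
  intro x y Λt Λs P11 P12 P22 Λts
  set A := S11 + T22 with hAdef
  have hA : Aᵀ = A := by rw [hAdef, transpose_add, hS11, hT22]
  have hAdet : A.det ≠ 0 := by
    have h := hneg.det_pos.ne'
    rw [det_neg] at h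
    intro h0
    exact h (by rw [h0, mul_zero])
  have hAA : A * A⁻¹ = 1 := mul_nonsing_inv A hAdet.isUnit
  have hAinvT : (A⁻¹)ᵀ = A⁻¹ := by rw [transpose_nonsing_inv, hA]
  set b : Fin n → ℝ := T12ᵀ *ᵥ x + S12 *ᵥ y with hb
  set u : Fin n → ℝ := A⁻¹ *ᵥ b with hu
  have hAu : A *ᵥ u = b := by rw [hu, mulVec_mulVec, hAA, one_mulVec]
  set C : ℝ := (1/2 : ℝ) * (x ⬝ᵥ (T11 *ᵥ x)) + (1/2 : ℝ) * (y ⬝ᵥ (S22 *ᵥ y))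
      - (1/2 : ℝ) * (b ⬝ᵥ u) with hC
  -- the objective function
  set f : (Fin n → ℝ) → ℝ := fun η =>
      (1/2 : ℝ) * (Sum.elim x η ⬝ᵥ (Λt *ᵥ Sum.elim x η)) +
        (1/2 : ℝ) * (Sum.elim η y ⬝ᵥ (Λs *ᵥ Sum.elim η y)) with hf
  have key : ∀ η : Fin n → ℝ, f η = C + (1/2 : ℝ) * ((η + u) ⬝ᵥ (A *ᵥ (η + u))) := by
    intro η
    have e1 : f η = (1/2 : ℝ) * (x ⬝ᵥ (T11 *ᵥ x)) + (1/2 : ℝ) * (y ⬝ᵥ (S22 *ᵥ y))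
        + (1/2 : ℝ) * (η ⬝ᵥ (A *ᵥ η)) + η ⬝ᵥ b := by
      simp only [hf, Λt, Λs, fromBlocks_mulVec, Sum.elim_comp_inl, Sum.elim_comp_inr,
        sumElim_dotProduct_sumElim, dotProduct_add, hAdef, add_mulVec, hb]
      rw [dot_transpose_mulVec T12 η x, dot_transpose_mulVec S12 y η]
      ring
    have e2 : (η + u) ⬝ᵥ (A *ᵥ (η + u)) = η ⬝ᵥ (A *ᵥ η) + 2 * (η ⬝ᵥ b) + b ⬝ᵥ u := by
      have h1 : u ⬝ᵥ (A *ᵥ η) = η ⬝ᵥ b := by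
        rw [← hA, dot_transpose_mulVec, hAu, dotProduct_comm]
      have h2 : η ⬝ᵥ (A *ᵥ u) = η ⬝ᵥ b := by rw [hAu]
      have h3 : u ⬝ᵥ (A *ᵥ u) = b ⬝ᵥ u := by
        rw [hAu]; exact dotProduct_comm _ _
      rw [mulVec_add, dotProduct_add, add_dotProduct, add_dotProduct, h1, h2, h3]
      ring
    rw [e1, e2, hC]; ring
  -- value of the RHS equals C
  have hRHS : (1/2 : ℝ) * (Sum.elim x y ⬝ᵥ (Λts *ᵥ Sum.elim x y)) = C := by
    have hbu : b ⬝ᵥ u = x ⬝ᵥ ((T12 * A⁻¹ * T12ᵀ) *ᵥ x)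
        + 2 * (x ⬝ᵥ ((T12 * A⁻¹ * S12) *ᵥ y)) + y ⬝ᵥ ((S12ᵀ * A⁻¹ * S12) *ᵥ y) := by
      have hx : ∀ w : Fin n → ℝ, (T12ᵀ *ᵥ x) ⬝ᵥ (A⁻¹ *ᵥ w) = x ⬝ᵥ ((T12 * A⁻¹) *ᵥ w) := by
        intro w
        rw [dotProduct_comm, dot_transpose_mulVec, mulVec_mulVec]
      have hy : ∀ w : Fin n → ℝ, (S12 *ᵥ y) ⬝ᵥ (A⁻¹ *ᵥ w) = y ⬝ᵥ ((S12ᵀ * A⁻¹) *ᵥ w) := by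
        intro w
        rw [dotProduct_comm, dot_mulVec_transpose, mulVec_mulVec]
      have hcross : x ⬝ᵥ ((T12 * A⁻¹) *ᵥ (S12 *ᵥ y)) = y ⬝ᵥ ((S12ᵀ * A⁻¹) *ᵥ (T12ᵀ *ᵥ x)) := by
        rw [mulVec_mulVec, mulVec_mulVec, dot_mulVec_transpose]
        congr 1
        rw [transpose_mul, transpose_mul, hAinvT, Matrix.mul_assoc]
      rw [hu, hb, mulVec_add A⁻¹, add_dotProduct, dotProduct_add, dotProduct_add,
        hx, hx, hy, hy, ← hcross]
      simp only [mulVec_mulVec, Matrix.mul_assoc]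
      ring
    have hP12T : Sum.elim x y ⬝ᵥ (Λts *ᵥ Sum.elim x y)
        = x ⬝ᵥ (P11 *ᵥ x) + 2 * (x ⬝ᵥ (P12 *ᵥ y)) + y ⬝ᵥ (P22 *ᵥ y) := by
      simp only [Λts, fromBlocks_mulVec, Sum.elim_comp_inl, Sum.elim_comp_inr,
        sumElim_dotProduct_sumElim, dotProduct_add]
      rw [dot_transpose_mulVec P12 y x]
      ring
    rw [hP12T, hC, hbu]
    simp only [P11, P12, P22, sub_mulVec, neg_mulVec, dotProduct_sub, dotProduct_neg, hAdef]
    ring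
  -- nonpositivity of the quadratic term
  have hquad : ∀ v : Fin n → ℝ, v ⬝ᵥ (A *ᵥ v) ≤ 0 := by
    intro v
    have := hneg.posSemidef.dotProduct_mulVec_nonneg v
    simp only [neg_mulVec, dotProduct_neg, star_trivial] at this
    linarith
  have hub : ∀ η, f η ≤ C := by
    intro η
    rw [key η]
    nlinarith [hquad (η + u)]
  have heq : f (-u) = C := by
    rw [key (-u)]
    simp
  rw [hRHS]
  refine le_antisymm (ciSup_le hub) ?_
  calc C = f (-u) := heq.symm
    _ ≤ ⨆ η, f η := le_ciSup ⟨C, Set.forall_mem_range.mpr hub⟩ (-u)
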